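/- Let n ∈ (0,1) and m = n/√(1-n²). If t : (-1/m, 1/m) → ℝ satisfies both m²θ·t'(θ) - (1-m²θ²)·t''(θ) = 0 and t'(θ) - 3m²θ·t''(θ) - (1-m²θ²)·(t'(θ)³ - t'''(θ)) = 0, with t' not identically zero, then t(θ) = c₂ + c₁·arcsin(mθ) for constants c₁, c₂ with c₁² = 1/n², i.e. c₁ = ±1/n. -/

import Mathlib

open Real

lemma const_of_hasDerivAt_zero {s : Set ℝ} (hc : Convex ℝ s) (ho : IsOpen s)
    {f : ℝ → ℝ} (h : ∀ x ∈ s, HasDerivAt f 0 x) {x y : ℝ} (hx : x ∈ s) (hy : y ∈ s) :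
    f x = f y := by
  refine hc.is_const_of_fderivWithin_eq_zero
    (fun z hz => ((h z hz).differentiableAt).differentiableWithinAt) (fun z hz => ?_) hx hy
  rw [fderivWithin_of_isOpen ho hz, (h z hz).hasFDerivAt.fderiv]
  ext; simp

/-- If t is C³ on (-1/m, 1/m) and satisfies both
m²θ t' - (1-m²θ²) t'' = 0 and t' - 3m²θ t'' - (1-m²θ²)(t'³ - t''') = 0,
with t' not identically zero, then t(θ) = c₂ + c₁ arcsin(mθ) with c₁² = 1/n². -/
theorem solution_of_t_odes (n m : ℝ) (hn : n ∈ Set.Ioo (0:ℝ) 1)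
    (hm : m = n / Real.sqrt (1 - n ^ 2))
    (t : ℝ → ℝ)
    (ht : ContDiffOn ℝ 3 t (Set.Ioo (-(1/m)) (1/m)))
    (hode1 : ∀ θ ∈ Set.Ioo (-(1/m)) (1/m),
      m ^ 2 * θ * deriv t θ - (1 - m ^ 2 * θ ^ 2) * deriv (deriv t) θ = 0)
    (hode2 : ∀ θ ∈ Set.Ioo (-(1/m)) (1/m),
      deriv t θ - 3 * m ^ 2 * θ * deriv (deriv t) θ
        - (1 - m ^ 2 * θ ^ 2) * ((deriv t θ) ^ 3 - deriv (deriv (deriv t)) θ) = 0)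
    (hnz : ∃ θ ∈ Set.Ioo (-(1/m)) (1/m), deriv t θ ≠ 0) :
    ∃ c₁ c₂ : ℝ, c₁ ^ 2 = 1 / n ^ 2 ∧
      ∀ θ ∈ Set.Ioo (-(1/m)) (1/m), t θ = c₂ + c₁ * Real.arcsin (m * θ) := by
  obtain ⟨hn0, hn1⟩ := hn
  have hn2 : (0:ℝ) < 1 - n ^ 2 := by nlinarith
  have hsqn : Real.sqrt (1 - n ^ 2) > 0 := Real.sqrt_pos.mpr hn2
  have hmpos : 0 < m := by rw [hm]; positivity
  have hm2 : m ^ 2 = n ^ 2 / (1 - n ^ 2) := by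
    rw [hm, div_pow, Real.sq_sqrt hn2.le]
  set I := Set.Ioo (-(1/m)) (1/m) with hIdef
  have hIo : IsOpen I := isOpen_Ioo
  have hIc : Convex ℝ I := convex_Ioo _ _
  have h0I : (0:ℝ) ∈ I := by
    constructor <;> simp [hIdef] <;> positivity
  -- positivity of 1 - m²θ² on I
  have hspos : ∀ θ ∈ I, 0 < 1 - m ^ 2 * θ ^ 2 := by
    rintro θ ⟨h1, h2⟩
    have e1 : m * θ < 1 := by
      have := (lt_div_iff₀ hmpos).mp h2; linarith [mul_comm m θ]
    have e2 : -1 < m * θ := by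
      have h := (mul_lt_mul_iff_right₀ hmpos).mpr h1
      rw [show m * -(1/m) = -1 by field_simp] at h
      linarith
    nlinarith
  -- differentiability facts
  have hu2 : ContDiffOn ℝ 2 (deriv t) I := ht.deriv_of_isOpen hIo (by norm_num)
  have hv1 : ContDiffOn ℝ 1 (deriv (deriv t)) I := hu2.deriv_of_isOpen hIo (by norm_num)
  have hud : ∀ θ ∈ I, DifferentiableAt ℝ (deriv t) θ := fun θ hθ =>
    (hu2.differentiableOn (by norm_num)).differentiableAt (hIo.mem_nhds hθ)
  have hvd : ∀ θ ∈ I, DifferentiableAt ℝ (deriv (deriv t)) θ := fun θ hθ =>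
    (hv1.differentiableOn (by norm_num)).differentiableAt (hIo.mem_nhds hθ)
  have htd : ∀ θ ∈ I, DifferentiableAt ℝ t θ := fun θ hθ =>
    (ht.differentiableOn (by norm_num)).differentiableAt (hIo.mem_nhds hθ)
  -- inner function derivative
  have hinner : ∀ θ : ℝ, HasDerivAt (fun θ : ℝ => 1 - m ^ 2 * θ ^ 2) (-(m ^ 2 * (2 * θ))) θ := by
    intro θ
    simpa using ((hasDerivAt_pow 2 θ).const_mul (m ^ 2)).const_sub 1
  -- Step A: g is constant
  set K := deriv t 0 with hK
  have hg : ∀ θ ∈ I, HasDerivAt (fun θ => deriv t θ * Real.sqrt (1 - m ^ 2 * θ ^ 2)) 0 θ := by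
    intro θ hθ
    have hs := hspos θ hθ
    have hsqrt : Real.sqrt (1 - m ^ 2 * θ ^ 2) > 0 := Real.sqrt_pos.mpr hs
    have hmul : Real.sqrt (1 - m ^ 2 * θ ^ 2) * Real.sqrt (1 - m ^ 2 * θ ^ 2)
        = 1 - m ^ 2 * θ ^ 2 := Real.mul_self_sqrt hs.le
    have hcomp : HasDerivAt (fun θ => Real.sqrt (1 - m ^ 2 * θ ^ 2))
        (1 / (2 * Real.sqrt (1 - m ^ 2 * θ ^ 2)) * (-(m ^ 2 * (2 * θ)))) θ :=
      (Real.hasDerivAt_sqrt (ne_of_gt hs)).comp θ (hinner θ)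
    have hprod := ((hud θ hθ).hasDerivAt).mul hcomp
    refine hprod.congr_deriv (Eq.symm ?_)
    have hode := hode1 θ hθ
    field_simp
    linear_combination hode - (deriv (deriv t) θ) * hmul
  have hKeq : ∀ θ ∈ I, deriv t θ * Real.sqrt (1 - m ^ 2 * θ ^ 2) = K := by
    intro θ hθ
    have := const_of_hasDerivAt_zero hIc hIo hg hθ h0I
    simpa using this
  -- Step B: K ≠ 0
  have hKne : K ≠ 0 := by
    obtain ⟨θ₀, hθ₀, hne⟩ := hnz
    have := hKeq θ₀ hθ₀
    have hsq : Real.sqrt (1 - m ^ 2 * θ₀ ^ 2) > 0 := Real.sqrt_pos.mpr (hspos θ₀ hθ₀)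
    intro h; rw [h] at this
    exact hne (by
      rcases mul_eq_zero.mp this with h' | h'
      · exact h'
      · exact absurd h' (ne_of_gt hsq))
  -- Step C: third derivative at 0
  have hF : HasDerivAt (fun θ => m ^ 2 * θ * deriv t θ - (1 - m ^ 2 * θ ^ 2) * deriv (deriv t) θ)
      (m ^ 2 * deriv t 0 - deriv (deriv (deriv t)) 0) 0 := by
    have hA : HasDerivAt (fun θ => m ^ 2 * θ * deriv t θ)
        (m ^ 2 * deriv t 0 + m ^ 2 * 0 * deriv (deriv t) 0) 0 := by
      have h1 : HasDerivAt (fun θ : ℝ => m ^ 2 * θ) (m ^ 2) 0 := by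
        simpa using (hasDerivAt_id (0:ℝ)).const_mul (m ^ 2)
      exact h1.mul ((hud 0 h0I).hasDerivAt)
    have hB : HasDerivAt (fun θ => (1 - m ^ 2 * θ ^ 2) * deriv (deriv t) θ)
        (-(m ^ 2 * (2 * 0)) * deriv (deriv t) 0 + (1 - m ^ 2 * 0 ^ 2) * deriv (deriv (deriv t)) 0) 0 :=
      (hinner 0).mul ((hvd 0 h0I).hasDerivAt)
    have := hA.sub hB
    refine this.congr_deriv (Eq.symm ?_)
    ring
  have hF0 : deriv (fun θ => m ^ 2 * θ * deriv t θ - (1 - m ^ 2 * θ ^ 2) * deriv (deriv t) θ) 0 = 0 := by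
    have hev : (fun θ => m ^ 2 * θ * deriv t θ - (1 - m ^ 2 * θ ^ 2) * deriv (deriv t) θ)
        =ᶠ[nhds 0] fun _ => (0:ℝ) :=
      Filter.eventually_of_mem (hIo.mem_nhds h0I) hode1
    rw [hev.deriv_eq]; simp
  have hw0 : deriv (deriv (deriv t)) 0 = m ^ 2 * deriv t 0 := by
    have := hF.deriv
    rw [hF0] at this
    linarith
  -- Step D: K² = 1 + m²
  have hK2 : K ^ 2 = 1 + m ^ 2 := by
    have h2 := hode2 0 h0I
    rw [hw0] at h2
    simp at h2
    have : K * (1 + m ^ 2 - K ^ 2) = 0 := by rw [hK]; linear_combination h2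
    rcases mul_eq_zero.mp this with h | h
    · exact absurd h hKne
    · linarith
  -- c₁
  refine ⟨K / m, t 0, ?_, ?_⟩
  · rw [div_pow, hK2, hm2]
    field_simp
    ring
  · intro θ hθ
    have hs := hspos θ hθ
    have hsqrt : Real.sqrt (1 - m ^ 2 * θ ^ 2) > 0 := Real.sqrt_pos.mpr hs
    have hmθ1 : m * θ ≠ 1 := by intro h; nlinarith [hs, h]
    have hmθ2 : m * θ ≠ -1 := by intro h; nlinarith [hs]
    have harc : HasDerivAt (fun θ => Real.arcsin (m * θ))
        (1 / Real.sqrt (1 - (m * θ) ^ 2) * m) θ := by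
      have hmul : HasDerivAt (fun θ : ℝ => m * θ) m θ := by
        simpa using (hasDerivAt_id θ).const_mul m
      exact (Real.hasDerivAt_arcsin hmθ2 hmθ1).comp θ hmul
    have hh : ∀ θ ∈ I, HasDerivAt (fun θ => t θ - K / m * Real.arcsin (m * θ)) 0 θ := by
      intro θ' hθ'
      have hs' := hspos θ' hθ'
      have hsqrt' : Real.sqrt (1 - m ^ 2 * θ' ^ 2) > 0 := Real.sqrt_pos.mpr hs'
      have hmθ1' : m * θ' ≠ 1 := by intro h; nlinarith [hs']
      have hmθ2' : m * θ' ≠ -1 := by intro h; nlinarith [hs']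
      have harc' : HasDerivAt (fun θ => Real.arcsin (m * θ))
          (1 / Real.sqrt (1 - (m * θ') ^ 2) * m) θ' := by
        have hmul : HasDerivAt (fun θ : ℝ => m * θ) m θ' := by
          simpa using (hasDerivAt_id θ').const_mul m
        exact (Real.hasDerivAt_arcsin hmθ2' hmθ1').comp θ' hmul
      have := ((htd θ' hθ').hasDerivAt).sub (harc'.const_mul (K / m))
      refine this.congr_deriv (Eq.symm ?_)
      have heq : (1 : ℝ) - (m * θ') ^ 2 = 1 - m ^ 2 * θ' ^ 2 := by ring
      rw [heq]
      have hKθ := hKeq θ' hθ'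
      field_simp
      linear_combination -hKθ
    have hconst := const_of_hasDerivAt_zero hIc hIo hh hθ h0I
    simp only [mul_zero, Real.arcsin_zero] at hconst
    linarith
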